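/- arXiv:2501.04720 — 2 statements merged into one kernel-verified Lean document; each statement's English description precedes it below -/
import Mathlib

section
/- Let R be a semi-potent ring. The following are equivalent: (i) R is a ΔU ring; (ii) x - x² ∈ J(R) for every x ∈ R (i.e., R/J(R) is Boolean); (iii) R is a UJ ring; (iv) for every unit u of R there exists n ≥ 1 with (u - 1)ⁿ ∈ J(R) (i.e., R/J(R) is a UU ring). -/
set_option maxHeartbeats 1000000

/-- `Δ(R) = {r ∈ R : r + u is a unit for every unit u of R}`. -/
def Delta (R : Type*) [Ring R] : Set R := {r : R | ∀ u : Rˣ, IsUnit (r + (u : R))}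

/-- A ring `R` is a ΔU ring if every unit `u` satisfies `u - 1 ∈ Δ(R)`. -/
def IsDeltaU (R : Type*) [Ring R] : Prop := ∀ u : Rˣ, (u : R) - 1 ∈ Delta R

section Jac
variable {R : Type*} [Ring R]

private lemma jac_left_inv {x : R} (hx : x ∈ Ideal.jacobson (⊥ : Ideal R)) (y : R) :
    ∃ z : R, z * (y * x + 1) = 1 := by
  obtain ⟨z, hz⟩ := Ideal.mem_jacobson_iff.1 hx y
  rw [Submodule.mem_bot, sub_eq_zero] at hz
  exact ⟨z, by rw [mul_add, mul_one, ← mul_assoc, hz]⟩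

private lemma jac_isUnit_one_add {x : R} (hx : x ∈ Ideal.jacobson (⊥ : Ideal R)) :
    IsUnit (1 + x) := by
  obtain ⟨z, hz⟩ := jac_left_inv hx 1
  rw [one_mul] at hz
  have hz' : z = -(z * x) + 1 := by
    have h0 : z * x + z = 1 := by
      rw [mul_add, mul_one] at hz; linear_combination (norm := noncomm_ring) hz
    linear_combination (norm := noncomm_ring) h0
  obtain ⟨w, hw⟩ := jac_left_inv (neg_mem (Ideal.mul_mem_left _ z hx)) 1
  rw [one_mul, ← hz'] at hw
  have hxz : (x + 1) * z = 1 := by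
    calc (x+1) * z = (w * z) * ((x+1) * z) := by rw [hw, one_mul]
      _ = w * (z * (x+1)) * z := by noncomm_ring
      _ = 1 := by rw [hz, mul_one, hw]
  have hzx : z * (x + 1) = 1 := hz
  rw [add_comm]
  exact ⟨⟨x + 1, z, hxz, hzx⟩, rfl⟩

private lemma jac_isUnit_one_sub {x : R} (hx : x ∈ Ideal.jacobson (⊥ : Ideal R)) :
    IsUnit (1 - x) := by
  have := jac_isUnit_one_add (neg_mem hx)
  rwa [← sub_eq_add_neg] at this

private lemma isUnit_one_add_swap {a b : R} (h : IsUnit (1 + a * b)) : IsUnit (1 + b * a) := by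
  obtain ⟨u, hu⟩ := h
  have h1 : (1 + a*b) * (↑u⁻¹ : R) = 1 := by rw [← hu]; exact u.mul_inv
  have h2 : (↑u⁻¹ : R) * (1 + a*b) = 1 := by rw [← hu]; exact u.inv_mul
  set v := (↑u⁻¹ : R)
  refine ⟨⟨1 + b*a, 1 - b*v*a, ?_, ?_⟩, rfl⟩
  · calc (1 + b*a) * (1 - b*v*a) = 1 + b*a - b*((1+a*b)*v)*a := by noncomm_ring
      _ = 1 + b*a - b*1*a := by rw [h1]
      _ = 1 := by noncomm_ring
  · calc (1 - b*v*a) * (1 + b*a) = 1 + b*a - b*(v*(1+a*b))*a := by noncomm_ring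
      _ = 1 + b*a - b*1*a := by rw [h2]
      _ = 1 := by noncomm_ring

private lemma jac_mul_mem_right {x : R} (hx : x ∈ Ideal.jacobson (⊥ : Ideal R)) (y : R) :
    x * y ∈ Ideal.jacobson (⊥ : Ideal R) := by
  rw [Ideal.mem_jacobson_iff]
  intro y'
  have h1 : IsUnit (1 + y * (y' * x)) :=
    jac_isUnit_one_add (Ideal.mul_mem_left _ _ (Ideal.mul_mem_left _ _ hx))
  have h2 : IsUnit (1 + (y' * x) * y) := isUnit_one_add_swap h1
  obtain ⟨u, hu⟩ := h2
  refine ⟨(↑u⁻¹ : R), ?_⟩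
  have h3 : (↑u⁻¹ : R) * (1 + y' * x * y) = 1 := by rw [← hu]; exact u.inv_mul
  rw [Submodule.mem_bot, sub_eq_zero]
  calc (↑u⁻¹:R) * y' * (x * y) + ↑u⁻¹ = ↑u⁻¹ * (1 + y' * x * y) := by noncomm_ring
    _ = 1 := h3

end Jac

section Quot
variable (R : Type*) [Ring R]

/-- The congruence relation of the Jacobson radical. -/
def jCon : RingCon R where
  r a b := a - b ∈ Ideal.jacobson (⊥ : Ideal R)
  iseqv := ⟨fun a => by simp, fun {a b} h => by simpa using neg_mem h,
    fun {a b c} h1 h2 => by simpa using add_mem h1 h2⟩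
  add' := fun {a b c d} h1 h2 => by
    have := add_mem h1 h2
    simpa [add_sub_add_comm] using this
  mul' := fun {a b c d} h1 h2 => by
    show a * c - b * d ∈ _
    have : a * c - b * d = a * (c - d) + (a - b) * d := by noncomm_ring
    rw [this]
    exact add_mem (Ideal.mul_mem_left _ _ h2) (jac_mul_mem_right h1 d)

variable {R}

lemma jCon_iff {a b : R} : jCon R a b ↔ a - b ∈ Ideal.jacobson (⊥ : Ideal R) := Iff.rfl

abbrev JQuot (R : Type*) [Ring R] := (jCon R).Quotient

def jmk : R →+* JQuot R := RingCon.mk' (jCon R)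

lemma jmk_surjective : Function.Surjective (jmk (R := R)) :=
  fun x => Quot.inductionOn x fun a => ⟨a, rfl⟩

lemma jmk_eq_zero {a : R} : jmk a = 0 ↔ a ∈ Ideal.jacobson (⊥ : Ideal R) := by
  have h0 : (0 : JQuot R) = jmk 0 := rfl
  have h1 : jmk a = jmk 0 ↔ (jCon R) a 0 := RingCon.eq _
  rw [h0, h1, jCon_iff, sub_zero]

lemma isUnit_of_jmk_isUnit {a : R} (h : IsUnit (jmk a)) : IsUnit a := by
  obtain ⟨u, hu⟩ := h
  obtain ⟨b, hb⟩ := jmk_surjective (↑u⁻¹ : JQuot R)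
  have h1 : jmk (a * b) = 1 := by rw [map_mul, ← hu, hb]; exact u.mul_inv
  have h2 : jmk (b * a) = 1 := by rw [map_mul, ← hu, hb]; exact u.inv_mul
  have m1 : a * b - 1 ∈ Ideal.jacobson (⊥ : Ideal R) := by
    have : jmk (a * b - 1) = 0 := by rw [map_sub, h1, map_one, sub_self]
    exact jmk_eq_zero.1 this
  have m2 : b * a - 1 ∈ Ideal.jacobson (⊥ : Ideal R) := by
    have : jmk (b * a - 1) = 0 := by rw [map_sub, h2, map_one, sub_self]
    exact jmk_eq_zero.1 this
  have u1 : IsUnit (a * b) := by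
    have := jac_isUnit_one_sub (neg_mem m1)
    simpa [sub_neg_eq_add] using this
  have u2 : IsUnit (b * a) := by
    have := jac_isUnit_one_sub (neg_mem m2)
    simpa [sub_neg_eq_add] using this
  obtain ⟨v1, hv1⟩ := u1
  obtain ⟨v2, hv2⟩ := u2
  have hR : a * (b * ↑v1⁻¹) = 1 := by rw [← mul_assoc, ← hv1]; exact v1.mul_inv
  have hL : (↑v2⁻¹ * b) * a = 1 := by rw [mul_assoc, ← hv2]; exact v2.inv_mul
  have heq : b * ↑v1⁻¹ = ↑v2⁻¹ * b := by
    calc b * ↑v1⁻¹ = ((↑v2⁻¹ * b) * a) * (b * ↑v1⁻¹) := by rw [hL, one_mul]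
      _ = (↑v2⁻¹ * b) * (a * (b * ↑v1⁻¹)) := by noncomm_ring
      _ = ↑v2⁻¹ * b := by rw [hR, mul_one]
  exact ⟨⟨a, b * ↑v1⁻¹, hR, by rw [heq, hL]⟩, rfl⟩

lemma jmk_idem_ne_zero {e : R} (he : e * e = e) (hne : e ≠ 0) : jmk e ≠ 0 := by
  intro h
  have hmem : e ∈ Ideal.jacobson (⊥ : Ideal R) := jmk_eq_zero.1 h
  obtain ⟨v, hv⟩ := jac_isUnit_one_sub hmem
  have h0 : e * (1 - e) = 0 := by rw [mul_sub, mul_one, he, sub_self]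
  have : e = 0 := by
    calc e = e * ((1 - e) * ↑v⁻¹) := by rw [← hv, v.mul_inv, mul_one]
      _ = (e * (1 - e)) * ↑v⁻¹ := by rw [mul_assoc]
      _ = 0 := by rw [h0, zero_mul]
  exact hne this

lemma mem_jac_of_jmk_mem {z : R} (h : jmk z ∈ Ideal.jacobson (⊥ : Ideal (JQuot R))) :
    z ∈ Ideal.jacobson (⊥ : Ideal R) := by
  rw [Ideal.mem_jacobson_iff]
  intro y
  have h1 : IsUnit ((1 : JQuot R) + jmk y * jmk z) :=
    jac_isUnit_one_add (Ideal.mul_mem_left _ _ h)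
  have h2 : IsUnit (1 + y * z) := by
    apply isUnit_of_jmk_isUnit
    rw [map_add, map_one, map_mul]
    exact h1
  obtain ⟨u, hu⟩ := h2
  refine ⟨(↑u⁻¹ : R), ?_⟩
  have h3 : (↑u⁻¹ : R) * (1 + y * z) = 1 := by rw [← hu]; exact u.inv_mul
  rw [Submodule.mem_bot, sub_eq_zero]
  calc (↑u⁻¹:R) * y * z + ↑u⁻¹ = ↑u⁻¹ * (1 + y * z) := by noncomm_ring
    _ = 1 := h3

end Quot

section DeltaLemmas
variable {T : Type*} [Ring T]

lemma delta_neg {a : T} (h : a ∈ Delta T) : -a ∈ Delta T := by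
  intro u
  have h1 := h (-u)
  have h2 : (-a : T) + u = -(a + ↑(-u)) := by rw [Units.val_neg]; abel
  rw [h2]
  exact h1.neg

lemma delta_add {a b : T} (ha : a ∈ Delta T) (hb : b ∈ Delta T) : a + b ∈ Delta T := by
  intro u
  obtain ⟨v, hv⟩ := hb u
  have := ha v
  rw [hv] at this
  rwa [add_assoc]

lemma delta_idem_eq_zero {e : T} (h : e ∈ Delta T) (he : e * e = e) : e = 0 := by
  have h1 := h (-1)
  rw [Units.val_neg, Units.val_one] at h1
  obtain ⟨v, hv⟩ := h1
  have h0 : e * (e + -1) = 0 := by rw [mul_add, he, mul_neg_one]; abel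
  calc e = e * ((e + -1) * ↑v⁻¹) := by rw [← hv, v.mul_inv, mul_one]
    _ = (e * (e + -1)) * ↑v⁻¹ := by rw [mul_assoc]
    _ = 0 := by rw [h0, zero_mul]

/-- a square-zero element gives a unit `1 + a`. -/
def unipUnit (a : T) (ha : a * a = 0) : Tˣ :=
  ⟨1 + a, 1 - a,
    by have h : (1+a)*(1-a) = 1 - a*a := by noncomm_ring
       rw [h, ha, sub_zero],
    by have h : (1-a)*(1+a) = 1 - a*a := by noncomm_ring
       rw [h, ha, sub_zero]⟩

lemma sq_zero_mem_delta (hDU : IsDeltaU T) {a : T} (ha : a * a = 0) : a ∈ Delta T := by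
  have := hDU (unipUnit a ha)
  simpa [unipUnit] using this

lemma mu_deltaU (hDU : IsDeltaU T) {a b : T} (ha : a * a = 0) (hb : b * b = 0)
    (haba : a * b * a = a) (hbab : b * a * b = b) : a * b = 0 := by
  set g := a * b + b * a with hgdef
  set s := a + b with hsdef
  have h1 : (a*b)*(a*b) = a*b := by
    calc (a*b)*(a*b) = (a*b*a)*b := by noncomm_ring
      _ = a*b := by rw [haba]
  have h2 : (b*a)*(b*a) = b*a := by
    calc (b*a)*(b*a) = (b*a*b)*a := by noncomm_ring
      _ = b*a := by rw [hbab]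
  have h3 : (a*b)*(b*a) = 0 := by
    calc (a*b)*(b*a) = a*(b*b)*a := by noncomm_ring
      _ = 0 := by rw [hb]; noncomm_ring
  have h4 : (b*a)*(a*b) = 0 := by
    calc (b*a)*(a*b) = b*(a*a)*b := by noncomm_ring
      _ = 0 := by rw [ha]; noncomm_ring
  have hgg : g * g = g := by
    have e1 : g * g = (a*b)*(a*b) + (a*b)*(b*a) + (b*a)*(a*b) + (b*a)*(b*a) := by
      rw [hgdef]; noncomm_ring
    rw [e1, h1, h2, h3, h4, hgdef]; abel
  have hss : s * s = g := by
    have e1 : s * s = a*a + a*b + b*a + b*b := by rw [hsdef]; noncomm_ring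
    rw [e1, ha, hb, hgdef]; abel
  have hgs : g * s = s := by
    have e1 : g * s = (a*b*a) + a*(b*b) + b*(a*a) + (b*a*b) := by rw [hgdef, hsdef]; noncomm_ring
    rw [e1, haba, hbab, ha, hb, hsdef]; simp
  have hsg : s * g = s := by
    have e1 : s * g = (a*a)*b + (a*b*a) + (b*a*b) + (b*b)*a := by rw [hgdef, hsdef]; noncomm_ring
    rw [e1, haba, hbab, ha, hb, hsdef]; simp
  have huu : (1 - g + s) * (1 - g + s) = 1 := by
    have e1 : (1 - g + s) * (1 - g + s) = 1 - g - g + g*g + s + s - g*s - s*g + s*s := by noncomm_ring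
    rw [e1, hgg, hgs, hsg, hss]; abel
  have hDU1 := hDU ⟨1 - g + s, 1 - g + s, huu, huu⟩
  have hd : s - g ∈ Delta T := by
    have e1 : (1 - g + s) - 1 = s - g := by abel
    rwa [e1] at hDU1
  have haD : a ∈ Delta T := sq_zero_mem_delta hDU ha
  have hbD : b ∈ Delta T := sq_zero_mem_delta hDU hb
  have hgD : g ∈ Delta T := by
    have e1 : g = (a + b) + -(s - g) := by rw [hsdef]; abel
    rw [e1]
    exact delta_add (delta_add haD hbD) (delta_neg hd)
  have hg0 : g = 0 := delta_idem_eq_zero hgD hgg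
  have : a*b = (a*b)*g := by
    rw [hgdef, mul_add, h1, h3, add_zero]
  rw [this, hg0, mul_zero]
end DeltaLemmas

section MuUnip
variable {T : Type*} [Ring T]

lemma mu_unip (h2 : (2 : T) = 0) (hU : ∀ u : Tˣ, ∃ n : ℕ, 1 ≤ n ∧ ((u : T) - 1) ^ n = 0)
    {a b : T} (ha : a * a = 0) (hb : b * b = 0)
    (haba : a * b * a = a) (hbab : b * a * b = b) : a * b = 0 := by
  set g := a * b + b * a with hgdef
  set c := a + b + b * a with hcdef
  have h1 : (a*b)*(a*b) = a*b := by
    calc (a*b)*(a*b) = (a*b*a)*b := by noncomm_ring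
      _ = a*b := by rw [haba]
  have h2' : (b*a)*(b*a) = b*a := by
    calc (b*a)*(b*a) = (b*a*b)*a := by noncomm_ring
      _ = b*a := by rw [hbab]
  have h3 : (a*b)*(b*a) = 0 := by
    calc (a*b)*(b*a) = a*(b*b)*a := by noncomm_ring
      _ = 0 := by rw [hb]; noncomm_ring
  have h4 : (b*a)*(a*b) = 0 := by
    calc (b*a)*(a*b) = b*(a*a)*b := by noncomm_ring
      _ = 0 := by rw [ha]; noncomm_ring
  have hgg : g * g = g := by
    have e1 : g * g = (a*b)*(a*b) + (a*b)*(b*a) + (b*a)*(a*b) + (b*a)*(b*a) := by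
      rw [hgdef]; noncomm_ring
    rw [e1, h1, h2', h3, h4, hgdef]; abel
  have hgc : g * c = c := by
    have e1 : g * c = (a*b*a) + a*(b*b) + (a*b)*(b*a) + b*(a*a) + (b*a*b) + (b*a)*(b*a) := by
      rw [hgdef, hcdef]; noncomm_ring
    rw [e1, haba, hbab, ha, hb, h3, h2', hcdef]; simp
  have hcg : c * g = c := by
    have e1 : c * g = (a*a)*b + (a*b*a) + (b*a*b) + (b*b)*a + (b*a)*(a*b) + (b*a)*(b*a) := by
      rw [hgdef, hcdef]; noncomm_ring
    rw [e1, haba, hbab, ha, hb, h4, h2', hcdef]; simp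
  have hcc : c * c = a*b + a + b := by
    have e1 : c * c = a*a + a*b + a*(b*a) + b*a + b*b + (b*b)*a + b*(a*a) + (b*a*b) + (b*a)*(b*a) := by
      rw [hcdef]; noncomm_ring
    have e2 : a*(b*a) = a := by rw [← mul_assoc, haba]
    rw [e1, e2, ha, hb, hbab, h2']
    have e3 : (0:T) + a*b + a + b*a + 0 + 0*a + b*0 + b + b*a = a*b + a + b + (b*a + b*a) := by
      simp only [mul_zero, zero_mul, add_zero, zero_add]; abel
    rw [e3, ← two_mul, h2, zero_mul, add_zero]
  have hccc : (c * c) * c = g := by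
    rw [hcc]
    have e1 : (a*b + a + b) * c = (a*b*a) + a*(b*b) + (a*b)*(b*a) + a*a + a*b + a*(b*a)
        + b*a + b*b + b*(b*a) := by rw [hcdef]; noncomm_ring
    have e2 : a*(b*a) = a := by rw [← mul_assoc, haba]
    have e3 : b*(b*a) = (b*b)*a := by noncomm_ring
    rw [e1, e2, e3, haba, ha, hb, h3]
    have e4 : a + a*0 + 0 + 0 + a*b + a + b*a + 0 + 0*a = a*b + b*a + (a + a) := by
      simp only [mul_zero, zero_mul, add_zero, zero_add]; abel
    rw [e4, ← two_mul, h2, zero_mul, add_zero, hgdef]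
  have huu2 : (1 - g + c) * (1 - g + c*c) = 1 := by
    have e1 : (1 - g + c) * (1 - g + c*c) = 1 - g - g + g*g + c*c - g*(c*c) + c - c*g + c*(c*c) := by
      noncomm_ring
    have e2 : g*(c*c) = c*c := by rw [← mul_assoc, hgc]
    have e3 : c*(c*c) = (c*c)*c := by noncomm_ring
    rw [e1, e2, e3, hgg, hcg, hccc]; abel
  have hu2u : (1 - g + c*c) * (1 - g + c) = 1 := by
    have e1 : (1 - g + c*c) * (1 - g + c) = 1 - g - g + g*g + c - g*c + c*c - (c*c)*g + (c*c)*c := by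
      noncomm_ring
    have e2 : (c*c)*g = c*c := by rw [mul_assoc, hcg]
    rw [e1, e2, hgg, hgc, hccc]; abel
  set u : Tˣ := ⟨1 - g + c, 1 - g + c*c, huu2, hu2u⟩ with hudef
  obtain ⟨n, hn1, hqn⟩ := hU u
  have hq : (u : T) - 1 = c - g := by rw [hudef]; show (1 - g + c) - 1 = c - g; abel
  set q : T := c - g with hqdef
  rw [hq] at hqn
  -- u^3 = 1
  have hu3 : (u:T)*(u:T)*(u:T) = 1 := by
    have huu : (u:T)*(u:T) = 1 - g + c*c := by
      show (1 - g + c)*(1 - g + c) = 1 - g + c*c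
      have e1 : (1 - g + c)*(1 - g + c) = 1 - g - g + g*g + c + c - g*c - c*g + c*c := by noncomm_ring
      rw [e1, hgg, hgc, hcg]; abel
    rw [huu]
    show (1 - g + c*c) * (1 - g + c) = 1
    exact hu2u
  -- doubling: u^(2^m) = 1 + q^(2^m)
  have hdouble : ∀ m : ℕ, (u:T)^(2^m) = 1 + q^(2^m) := by
    intro m
    induction m with
    | zero =>
      have e0 : (2:ℕ)^0 = 1 := rfl
      rw [e0, pow_one, pow_one, hqdef]
      show 1 - g + c = 1 + (c - g)
      abel
    | succ m ih =>
      have e1 : (2:ℕ)^(m+1) = 2^m * 2 := by ring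
      rw [e1, pow_mul, pow_mul, ih]
      have e2 : (1 + q^(2^m))^2 = 1 + (q^(2^m) + q^(2^m)) + (q^(2^m))^2 := by
        rw [pow_two]; noncomm_ring
      rw [e2, ← two_mul, h2, zero_mul, add_zero]
  -- q^(4^n) = 0
  have hnle : n ≤ 2^(2*n) := le_trans (Nat.lt_two_pow_self (n := n)).le (Nat.pow_le_pow_right (by norm_num) (by omega))
  have hqE : q^(2^(2*n)) = 0 := by
    obtain ⟨k, hk⟩ := Nat.exists_eq_add_of_le hnle
    rw [hk, pow_add, hqn, zero_mul]
  have huE : (u:T)^(2^(2*n)) = 1 := by rw [hdouble (2*n), hqE, add_zero]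
  -- 2^(2n) % 3 = 1
  have hmod : 2^(2*n) % 3 = 1 := by
    have : 2^(2*n) = 4^n := by rw [pow_mul]; norm_num
    rw [this, Nat.pow_mod]; norm_num
  have hdiv : 2^(2*n) = 3 * (2^(2*n) / 3) + 1 := by omega
  have hu1 : (u:T) = 1 := by
    have e1 : (u:T)^(2^(2*n)) = ((u:T)^3)^(2^(2*n)/3) * (u:T) := by
      rw [← pow_mul, ← pow_succ, ← hdiv]
    have e2 : (u:T)^3 = 1 := by rw [pow_succ, pow_two, hu3]
    rw [e2, one_pow, one_mul] at e1
    rw [← e1, huE]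
  have hcgeq : c = g := by
    have : (u:T) - 1 = 0 := by rw [hu1, sub_self]
    rw [hq] at this
    have := sub_eq_zero.1 this
    exact this
  have hab : a + b = a * b := by
    have : a + b + b*a = a*b + b*a := by rw [← hcdef, ← hgdef, hcgeq]
    have h5 := congrArg (fun t => t - b*a) this
    simpa using h5
  have hA : a = a*b := by
    have h5 : (a*b)*(a+b) = (a*b)*(a*b) := by rw [hab]
    rw [h1] at h5
    have h6 : (a*b)*(a+b) = (a*b*a) + a*(b*b) := by noncomm_ring
    rw [h6, haba, hb, mul_zero, add_zero] at h5
    exact h5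
  have hB : b = a*b := by
    have h5 : (a+b)*(a*b) = (a*b)*(a*b) := by rw [hab]
    rw [h1] at h5
    have h6 : (a+b)*(a*b) = (a*a)*b + (b*a*b) := by noncomm_ring
    rw [h6, hbab, ha, zero_mul, zero_add] at h5
    exact h5
  have hab2 : a = b := hA.trans hB.symm
  rw [← hab2]
  exact ha
end MuUnip

section CL
variable {T : Type*} [Ring T]

lemma matrix_pair (hsp₀ : ∀ a : T, a ≠ 0 → ∃ e : T, e ≠ 0 ∧ e * e = e ∧ ∃ r : T, e = a * r)
    {z : T} (hz : z ≠ 0) (hz2 : z * z = 0) :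
    ∃ A B : T, A * A = 0 ∧ B * B = 0 ∧ A * B * A = A ∧ B * A * B = B ∧ A * B ≠ 0 := by
  obtain ⟨e, hne, hee, c, hec⟩ := hsp₀ z hz
  have hzc : z * c = e := hec.symm
  have hzc' : ∀ x : T, z * (c * x) = e * x := fun x => by rw [← mul_assoc, hzc]
  have hzz' : ∀ x : T, z * (z * x) = 0 := fun x => by rw [← mul_assoc, hz2, zero_mul]
  have hee' : ∀ x : T, e * (e * x) = e * x := fun x => by rw [← mul_assoc, hee]
  have hze : z * e = 0 := by rw [← hzc, ← mul_assoc, hz2, zero_mul]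
  have hze' : ∀ x : T, z * (e * x) = 0 := fun x => by rw [← mul_assoc, hze, zero_mul]
  refine ⟨e * z, (c * e) * (e - e * (c * e * z)), ?_, ?_, ?_, ?_, ?_⟩
  · simp [mul_assoc, hzc, hzc', hz2, hzz', hee, hee', hze, hze']
  · simp [mul_assoc, mul_sub, sub_mul, hzc, hzc', hz2, hzz', hee, hee', hze, hze']
  · simp [mul_assoc, mul_sub, sub_mul, hzc, hzc', hz2, hzz', hee, hee', hze, hze']
  · simp [mul_assoc, mul_sub, sub_mul, hzc, hzc', hz2, hzz', hee, hee', hze, hze']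
  · have hred : (e * z) * ((c * e) * (e - e * (c * e * z))) = e - e * (c * e * z) := by
      simp [mul_assoc, mul_sub, sub_mul, hzc, hzc', hz2, hzz', hee, hee', hze, hze']
    rw [hred]
    intro h0
    have hef : e = e * (c * e * z) := by
      have := sub_eq_zero.1 h0
      exact this
    have : e = 0 := by
      calc e = e * e := hee.symm
        _ = (e * (c * e * z)) * e := by rw [← hef]
        _ = 0 := by simp [mul_assoc, hze, hze']
    exact hne this
end CL

section Config
variable {T : Type*} [Ring T]

lemma central_idem (hred : ∀ z : T, z * z = 0 → z = 0) {e : T} (hee : e * e = e) (r : T) :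
    e * r = r * e := by
  have h1 : e * r = e * (r * e) := by
    have k1 : (e*r - e*(r*e)) * e = 0 := by
      have a1 : (e*r)*e = e*(r*e) := by noncomm_ring
      have a2 : (e*(r*e))*e = e*(r*e) := by
        calc (e*(r*e))*e = e*(r*(e*e)) := by noncomm_ring
          _ = e*(r*e) := by rw [hee]
      rw [sub_mul, a1, a2, sub_self]
    have k2 : e*r - e*(r*e) = e*(r - r*e) := by rw [mul_sub, ← mul_assoc]
    have k3 : (e*r - e*(r*e)) * (e*r - e*(r*e)) = 0 := by
      calc (e*r - e*(r*e)) * (e*r - e*(r*e)) = (e*r - e*(r*e)) * (e*(r - r*e)) := by rw [← k2]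
        _ = ((e*r - e*(r*e)) * e) * (r - r*e) := by rw [mul_assoc]
        _ = 0 := by rw [k1, zero_mul]
    have := hred _ k3
    exact sub_eq_zero.1 this
  have h2 : r * e = e * (r * e) := by
    have k1 : e * (r*e - e*(r*e)) = 0 := by
      have a2 : e*(e*(r*e)) = e*(r*e) := by
        calc e*(e*(r*e)) = (e*e)*(r*e) := by noncomm_ring
          _ = e*(r*e) := by rw [hee]
      rw [mul_sub, a2, sub_self]
    have k2 : r*e - e*(r*e) = (r - e*r)*e := by rw [sub_mul, mul_assoc]
    have k3 : (r*e - e*(r*e)) * (r*e - e*(r*e)) = 0 := by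
      calc (r*e - e*(r*e)) * (r*e - e*(r*e)) = ((r - e*r)*e) * (r*e - e*(r*e)) := by rw [← k2]
        _ = (r - e*r) * (e * (r*e - e*(r*e))) := by rw [mul_assoc]
        _ = 0 := by rw [k1, mul_zero]
    have := hred _ k3
    exact sub_eq_zero.1 this
  rw [h1, ← h2]

lemma unit_config (hsp₀ : ∀ a : T, a ≠ 0 → ∃ e : T, e ≠ 0 ∧ e * e = e ∧ ∃ r : T, e = a * r)
    (hred : ∀ z : T, z * z = 0 → z = 0) {x : T} (hx : x - x * x ≠ 0) :
    ∃ e y c d : T, e ≠ 0 ∧ e * e = e ∧ e * y = y ∧ y * e = y ∧ e * c = c ∧ c * e = c ∧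
      e * d = d ∧ d * e = d ∧ y * c = e ∧ c * y = e ∧ (e - y) * d = e ∧ d * (e - y) = e := by
  obtain ⟨e, hne, hee, s, hes⟩ := hsp₀ _ hx
  have hcen : ∀ r : T, e * r = r * e := central_idem hred hee
  set y := x * e with hydef
  set t := s * e with htdef
  have hye : y * e = y := by rw [hydef, mul_assoc, hee]
  have hey : e * y = y := by rw [hydef, ← mul_assoc, hcen x, mul_assoc, hee]
  have hte : t * e = t := by rw [htdef, mul_assoc, hee]
  have het : e * t = t := by rw [htdef, ← mul_assoc, hcen s, mul_assoc, hee]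
  have hyy : y * y = x * x * e := by
    calc (x*e)*(x*e) = x*(e*x)*e := by noncomm_ring
      _ = x*(x*e)*e := by rw [hcen x]
      _ = (x*x)*(e*e) := by noncomm_ring
      _ = x*x*e := by rw [hee]
  have hXe : (x - x*x) * e = y - y*y := by rw [sub_mul, hyy, hydef]
  have hyyt : (y - y*y) * t = e := by
    calc (y - y*y) * t = ((x - x*x)*e) * (s*e) := by rw [hXe]
      _ = (x - x*x)*((e*s)*e) := by noncomm_ring
      _ = (x - x*x)*((s*e)*e) := by rw [hcen s]
      _ = (x - x*x)*(s*(e*e)) := by noncomm_ring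
      _ = ((x - x*x)*s)*e := by rw [hee, ← mul_assoc]
      _ = e*e := by rw [← hes]
      _ = e := hee
  refine ⟨e, y, (e - y) * t, y * t, hne, hee, hey, hye, ?_, ?_, ?_, ?_, ?_, ?_, ?_, ?_⟩
  · -- e * ((e-y)*t) = (e-y)*t
    rw [← mul_assoc, mul_sub, hee, hey]
  · -- ((e-y)*t) * e = (e-y)*t
    rw [mul_assoc, hte]
  · -- e * (y*t) = y*t
    rw [← mul_assoc, hey]
  · -- (y*t)*e = y*t
    rw [mul_assoc, hte]
  · -- y * ((e-y)*t) = e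
    calc y * ((e - y)*t) = (y*(e - y))*t := by rw [← mul_assoc]
      _ = (y - y*y)*t := by rw [mul_sub, hye]
      _ = e := hyyt
  · -- ((e-y)*t) * y = e
    set c := (e - y) * t with hcdef
    have hec : e * c = c := by rw [hcdef, ← mul_assoc, mul_sub, hee, hey]
    have hce : c * e = c := by rw [hcdef, mul_assoc, hte]
    have hyc : y * c = e := by
      calc y * ((e - y)*t) = (y*(e - y))*t := by rw [← mul_assoc]
        _ = (y - y*y)*t := by rw [mul_sub, hye]
        _ = e := hyyt
    set p := e - c * y with hpdef
    have hype : y * p = 0 := by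
      rw [hpdef, mul_sub, hye, ← mul_assoc, hyc, hey, sub_self]
    have e2 : (c*y)*e = c*y := by rw [mul_assoc, hye]
    have hp0 : p * y = 0 := by
      refine hred _ ?_
      have : (p*y)*(p*y) = p*((y*p)*y) := by noncomm_ring
      rw [this, hype, zero_mul, mul_zero]
    have hpe : p * e = p := by rw [hpdef, sub_mul, hee, e2]
    have hpz : p = 0 := by
      calc p = p*e := hpe.symm
        _ = p*(y*c) := by rw [hyc]
        _ = (p*y)*c := by rw [← mul_assoc]
        _ = 0 := by rw [hp0, zero_mul]
    have : e - c*y = 0 := by rw [← hpdef, hpz]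
    exact (sub_eq_zero.1 this).symm
  · -- (e - y) * (y*t) = e
    calc (e - y)*(y*t) = ((e - y)*y)*t := by rw [← mul_assoc]
      _ = (y - y*y)*t := by rw [sub_mul, hey]
      _ = e := hyyt
  · -- (y*t) * (e - y) = e
    set d := y * t with hddef
    have hed : e * d = d := by rw [hddef, ← mul_assoc, hey]
    have hde : d * e = d := by rw [hddef, mul_assoc, hte]
    have heyd : (e - y) * d = e := by
      calc (e - y)*(y*t) = ((e - y)*y)*t := by rw [← mul_assoc]
        _ = (y - y*y)*t := by rw [sub_mul, hey]
        _ = e := hyyt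
    set q := e - d * (e - y) with hqdef
    have he_ye : (e - y) * e = e - y := by rw [sub_mul, hee, hye]
    have he_ey : e * (e - y) = e - y := by rw [mul_sub, hee, hey]
    have h1q : (e - y) * q = 0 := by
      rw [hqdef, mul_sub, he_ye, ← mul_assoc, heyd, he_ey, sub_self]
    have hq0 : q * (e - y) = 0 := by
      refine hred _ ?_
      have : (q*(e-y))*(q*(e-y)) = q*(((e-y)*q)*(e-y)) := by noncomm_ring
      rw [this, h1q, zero_mul, mul_zero]
    have hk1 : (d*(e-y))*e = d*(e-y) := by rw [mul_assoc, he_ye]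
    have hqe : q * e = q := by rw [hqdef, sub_mul, hee, hk1]
    have hqz : q = 0 := by
      calc q = q*e := hqe.symm
        _ = q*((e-y)*d) := by rw [heyd]
        _ = (q*(e-y))*d := by rw [← mul_assoc]
        _ = 0 := by rw [hq0, zero_mul]
    have : e - d*(e-y) = 0 := by rw [← hqdef, hqz]
    exact (sub_eq_zero.1 this).symm

end Config

section Hard
variable {T : Type*} [Ring T]

lemma hard_deltaU (hsp₀ : ∀ a : T, a ≠ 0 → ∃ e : T, e ≠ 0 ∧ e * e = e ∧ ∃ r : T, e = a * r)
    (hDU : IsDeltaU T) (x : T) : x - x * x = 0 := by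
  by_contra hx
  have hred : ∀ z : T, z * z = 0 → z = 0 := by
    intro z h0
    by_contra hzne
    obtain ⟨A, B, hAA, hBB, hABA, hBAB, hABne⟩ := matrix_pair hsp₀ hzne h0
    exact hABne (mu_deltaU hDU hAA hBB hABA hBAB)
  obtain ⟨e, y, c, d, hne, hee, hey, hye, hec, hce, hed, hde, hyc, hcy, heyd, hdey⟩ :=
    unit_config hsp₀ hred hx
  have hY1 : (y + (1 - e)) * (c + (1 - e)) = 1 := by
    have exp : (y + (1 - e)) * (c + (1 - e))
        = y*c + (y - y*e) + (c - e*c) + (1 - e - e + e*e) := by noncomm_ring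
    rw [exp, hyc, hye, hec, hee]; abel
  have hY1' : (c + (1 - e)) * (y + (1 - e)) = 1 := by
    have exp : (c + (1 - e)) * (y + (1 - e))
        = c*y + (c - c*e) + (y - e*y) + (1 - e - e + e*e) := by noncomm_ring
    rw [exp, hcy, hce, hey, hee]; abel
  have hyd : y*d = d - e := by
    have h0 : e*d - y*d = e := by rw [← sub_mul]; exact heyd
    rw [hed] at h0
    linear_combination (norm := noncomm_ring) -h0
  have hdy : d*y = d - e := by
    have h0 : d*e - d*y = e := by rw [← mul_sub]; exact hdey
    rw [hde] at h0
    linear_combination (norm := noncomm_ring) -h0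
  have hY2 : (1 - y) * (d + (1 - e)) = 1 := by
    have exp : (1 - y) * (d + (1 - e)) = d + 1 - e - y*d - (y - y*e) := by noncomm_ring
    rw [exp, hyd, hye]; abel
  have hY2' : (d + (1 - e)) * (1 - y) = 1 := by
    have exp : (d + (1 - e)) * (1 - y) = d + 1 - e - d*y - (y - e*y) := by noncomm_ring
    rw [exp, hdy, hey]; abel
  have hd1 : y - e ∈ Delta T := by
    have h5 : (y + (1 - e)) - 1 ∈ Delta T := hDU ⟨y + (1 - e), c + (1 - e), hY1, hY1'⟩
    have exp : (y + (1 - e)) - 1 = y - e := by abel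
    rwa [exp] at h5
  have hd2 : -y ∈ Delta T := by
    have h5 : (1 - y) - 1 ∈ Delta T := hDU ⟨1 - y, d + (1 - e), hY2, hY2'⟩
    have exp : (1 - y) - 1 = -y := by abel
    rwa [exp] at h5
  have heD : e ∈ Delta T := by
    have h3 := delta_add (delta_neg hd2) (delta_neg hd1)
    have exp : -(-y) + -(y - e) = e := by abel
    rwa [exp] at h3
  exact hne (delta_idem_eq_zero heD hee)

lemma hard_unip (hsp₀ : ∀ a : T, a ≠ 0 → ∃ e : T, e ≠ 0 ∧ e * e = e ∧ ∃ r : T, e = a * r)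
    (h2 : (2 : T) = 0) (hU : ∀ u : Tˣ, ∃ n : ℕ, 1 ≤ n ∧ ((u : T) - 1) ^ n = 0)
    (x : T) : x - x * x = 0 := by
  by_contra hx
  have hred : ∀ z : T, z * z = 0 → z = 0 := by
    intro z h0
    by_contra hzne
    obtain ⟨A, B, hAA, hBB, hABA, hBAB, hABne⟩ := matrix_pair hsp₀ hzne h0
    exact hABne (mu_unip h2 hU hAA hBB hABA hBAB)
  obtain ⟨e, y, c, d, hne, hee, hey, hye, hec, hce, hed, hde, hyc, hcy, heyd, hdey⟩ :=
    unit_config hsp₀ hred hx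
  have hyd : y*d = d - e := by
    have h0 : e*d - y*d = e := by rw [← sub_mul]; exact heyd
    rw [hed] at h0
    linear_combination (norm := noncomm_ring) -h0
  have hdy : d*y = d - e := by
    have h0 : d*e - d*y = e := by rw [← mul_sub]; exact hdey
    rw [hde] at h0
    linear_combination (norm := noncomm_ring) -h0
  have hY2 : (1 - y) * (d + (1 - e)) = 1 := by
    have exp : (1 - y) * (d + (1 - e)) = d + 1 - e - y*d - (y - y*e) := by noncomm_ring
    rw [exp, hyd, hye]; abel
  have hY2' : (d + (1 - e)) * (1 - y) = 1 := by
    have exp : (d + (1 - e)) * (1 - y) = d + 1 - e - d*y - (y - e*y) := by noncomm_ring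
    rw [exp, hdy, hey]; abel
  obtain ⟨n, hn1, hqn⟩ := hU ⟨1 - y, d + (1 - e), hY2, hY2'⟩
  have hqn' : ((1 - y) - 1 : T) ^ n = 0 := hqn
  rw [show ((1:T) - y) - 1 = -y from by abel] at hqn'
  have hyn : y ^ n = 0 := by
    have e1 : (-y : T)^n = (-1)^n * y^n := neg_pow y n
    rw [e1] at hqn'
    have e2 := congrArg (fun t => ((-1:T)^n) * t) hqn'
    simp only [mul_zero] at e2
    rw [← mul_assoc, ← pow_add, show n + n = 2*n from by omega, pow_mul] at e2
    norm_num at e2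
    exact e2
  have hecn : ∀ m : ℕ, y ^ (m+1) * c ^ (m+1) = e := by
    intro m
    induction m with
    | zero => simpa using hyc
    | succ m ih =>
      rw [pow_succ' y (m+1), pow_succ c (m+1)]
      calc (y * y^(m+1)) * (c^(m+1) * c) = y * ((y^(m+1) * c^(m+1)) * c) := by noncomm_ring
        _ = y * (e * c) := by rw [ih]
        _ = e := by rw [hec, hyc]
  obtain ⟨m, hm⟩ := Nat.exists_eq_add_of_le hn1
  have hfin := hecn m
  rw [show m + 1 = n from by omega, hyn, zero_mul] at hfin
  exact hne hfin.symm

end Hard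

theorem deltaU_tfae_of_semipotent (R : Type*) [Ring R]
    (hsp : ∀ a : R, a ∉ Ideal.jacobson (⊥ : Ideal R) →
      ∃ e : R, e ≠ 0 ∧ e * e = e ∧ ∃ r : R, e = a * r) :
    List.TFAE
      [IsDeltaU R,
       ∀ x : R, x - x ^ 2 ∈ Ideal.jacobson (⊥ : Ideal R),
       ∀ u : Rˣ, (u : R) - 1 ∈ Ideal.jacobson (⊥ : Ideal R),
       ∀ u : Rˣ, ∃ n : ℕ, 1 ≤ n ∧ ((u : R) - 1) ^ n ∈ Ideal.jacobson (⊥ : Ideal R)] := by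
  have hsp₀ : ∀ a : JQuot R, a ≠ 0 → ∃ e : JQuot R, e ≠ 0 ∧ e * e = e ∧ ∃ r, e = a * r := by
    intro a ha
    obtain ⟨a0, rfl⟩ := jmk_surjective a
    have hmem : a0 ∉ Ideal.jacobson (⊥ : Ideal R) := fun hm => ha (jmk_eq_zero.2 hm)
    obtain ⟨e, hne, hee, r, her⟩ := hsp a0 hmem
    exact ⟨jmk e, jmk_idem_ne_zero hee hne, by rw [← map_mul, hee],
      jmk r, by rw [← map_mul, ← her]⟩
  tfae_have 1 → 2 := by
    intro h1 x
    have hDUT : IsDeltaU (JQuot R) := by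
      intro u v
      obtain ⟨a, ha⟩ := jmk_surjective (↑u : JQuot R)
      obtain ⟨b, hb⟩ := jmk_surjective (↑v : JQuot R)
      obtain ⟨ua, hua⟩ := isUnit_of_jmk_isUnit (a := a) (by rw [ha]; exact u.isUnit)
      obtain ⟨ub, hub⟩ := isUnit_of_jmk_isUnit (a := b) (by rw [hb]; exact v.isUnit)
      have h5 : IsUnit ((↑ua - 1 : R) + ↑ub) := h1 ua ub
      have h6 := h5.map (jmk (R := R))
      rw [map_add, map_sub, map_one, hua, hub, ha, hb] at h6
      exact h6
    have h7 := hard_deltaU hsp₀ hDUT (jmk x)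
    refine jmk_eq_zero.1 ?_
    rw [map_sub, map_pow, pow_two]
    exact h7
  tfae_have 2 → 3 := by
    intro h2 u
    have hmul := Ideal.mul_mem_left _ (↑u⁻¹ : R) (h2 (↑u : R))
    have e1 : (↑u⁻¹ : R) * ((↑u:R) - (↑u:R)^2) = 1 - ↑u := by
      rw [pow_two, mul_sub, ← mul_assoc, u.inv_mul, one_mul]
    rw [e1] at hmul
    have := neg_mem hmul
    simpa using this
  tfae_have 3 → 1 := by
    intro h3 u v
    have jv : (↑v⁻¹ : R) * ((↑u:R) - 1) ∈ Ideal.jacobson (⊥ : Ideal R) :=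
      Ideal.mul_mem_left _ _ (h3 u)
    have h4 := jac_isUnit_one_add jv
    have h5 := v.isUnit.mul h4
    have e1 : (↑v:R) * (1 + (↑v⁻¹:R)*((↑u:R) - 1)) = ↑v + ((↑u:R) - 1) := by
      rw [mul_add, mul_one, ← mul_assoc, v.mul_inv, one_mul]
    rw [e1] at h5
    rwa [add_comm] at h5
  tfae_have 3 → 4 := by
    intro h3 u
    exact ⟨1, le_refl 1, by rw [pow_one]; exact h3 u⟩
  tfae_have 4 → 2 := by
    intro h4 x
    have h2T : (2 : JQuot R) = 0 := by
      obtain ⟨n, hn1, hmem⟩ := h4 (-1)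
      have e1 : ((↑(-1 : Rˣ) : R) - 1) = -2 := by
        rw [Units.val_neg, Units.val_one]; norm_num
      rw [e1] at hmem
      have e2 : ((-1:R)*(-2))^n = (-1:R)^n * (-2:R)^n := (Commute.neg_one_left (-2:R)).mul_pow n
      have e3 : (2:R)^n = (-1:R)^n * (-2:R)^n := by rw [← e2]; norm_num
      have hmem2 : (2:R)^n ∈ Ideal.jacobson (⊥ : Ideal R) := by
        rw [e3]; exact Ideal.mul_mem_left _ _ hmem
      have hnil : ((2 : JQuot R))^n = 0 := by
        have := jmk_eq_zero.2 hmem2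
        rwa [map_pow, map_ofNat] at this
      have hjac : (2 : JQuot R) ∈ Ideal.jacobson (⊥ : Ideal (JQuot R)) := by
        rw [Ideal.mem_jacobson_iff]
        intro y
        have hcomm : Commute y ((2 : JQuot R)) := Commute.ofNat_right y 2
        have hnil2 : IsNilpotent (y * (2 : JQuot R)) := by
          refine ⟨n, ?_⟩
          rw [hcomm.mul_pow, hnil, mul_zero]
        obtain ⟨u, hu⟩ := hnil2.isUnit_one_add
        refine ⟨(↑u⁻¹ : JQuot R), ?_⟩
        have h3 : (↑u⁻¹ : JQuot R) * (1 + y * (2 : JQuot R)) = 1 := by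
          rw [← hu]; exact u.inv_mul
        rw [Submodule.mem_bot, sub_eq_zero]
        calc (↑u⁻¹ : JQuot R) * y * (2 : JQuot R) + ↑u⁻¹
            = ↑u⁻¹ * (1 + y * (2 : JQuot R)) := by noncomm_ring
          _ = 1 := h3
      have hjac2 : jmk (2 : R) ∈ Ideal.jacobson (⊥ : Ideal (JQuot R)) := by
        rw [map_ofNat]; exact hjac
      have := jmk_eq_zero.2 (mem_jac_of_jmk_mem hjac2)
      rwa [map_ofNat] at this
    have hUT : ∀ u : (JQuot R)ˣ, ∃ n : ℕ, 1 ≤ n ∧ ((↑u : JQuot R) - 1)^n = 0 := by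
      intro u
      obtain ⟨a, ha⟩ := jmk_surjective (↑u : JQuot R)
      obtain ⟨ua, hua⟩ := isUnit_of_jmk_isUnit (a := a) (by rw [ha]; exact u.isUnit)
      obtain ⟨n, hn1, hmem⟩ := h4 ua
      refine ⟨n, hn1, ?_⟩
      have := jmk_eq_zero.2 hmem
      rwa [map_pow, map_sub, map_one, hua, ha] at this
    have h7 := hard_unip hsp₀ h2T hUT (jmk x)
    refine jmk_eq_zero.1 ?_
    rw [map_sub, map_pow, pow_two]
    exact h7
  tfae_finish
end

section
/- For a ring R the following are equivalent: (i) R is a von Neumann regular 2-ΔU ring; (ii) R is a strongly regular 2-ΔU ring; (iii) R is a unit-regular 2-ΔU ring; (iv) R satisfies the identity x³ = x for all x ∈ R. -/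
/-- A ring `R` is a 2-ΔU ring if every unit `u` satisfies `u ^ 2 - 1 ∈ Δ(R)`. -/
def Is2DeltaU (R : Type*) [Ring R] : Prop := ∀ u : Rˣ, (u : R) ^ 2 - 1 ∈ Delta R

section Aux
variable {R : Type*} [Ring R]

private lemma idem_central (hred : ∀ z : R, z * z = 0 → z = 0)
    {e : R} (he : e * e = e) (r : R) : e * r = r * e := by
  have he' : ∀ s : R, e * (e * s) = e * s := fun s => by rw [← mul_assoc, he]
  have h1 : e * r - e * (r * e) = 0 := by
    apply hred; simp only [mul_sub, sub_mul, mul_assoc, he']; abel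
  have h2 : r * e - e * (r * e) = 0 := by
    apply hred; simp only [mul_sub, sub_mul, mul_assoc, he']; abel
  rw [sub_eq_zero] at h1 h2
  rw [h1, ← h2]

/-- In a reduced ring, a regular element is a unit times a central idempotent. -/
private lemma core (hred : ∀ z : R, z * z = 0 → z = 0) {a x : R} (h : a * x * a = a) :
    ∃ u : Rˣ, ∃ e : R, (e * e = e) ∧ (∀ r : R, e * r = r * e) ∧
      ((u : R) * e = a) ∧ (a * e = a) := by
  have he : (a * x) * (a * x) = a * x := by rw [← mul_assoc, h]
  have hcent := idem_central hred he
  have hae : a * (a * x) = a := by rw [← hcent a]; exact h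
  have hf : (x * a) * (x * a) = x * a := by
    rw [show x * a * (x * a) = x * (a * x * a) by noncomm_ring, h]
  have haf : a * (x * a) = a := by rw [← mul_assoc]; exact h
  have hfcent := idem_central hred hf
  have hfa : (x * a) * a = a := by rw [hfcent a]; exact haf
  have hfe1 : (x * a) * (a * x) = x * a := by
    rw [show (x*a) * (a*x) = x * (a * (a*x)) by noncomm_ring, hae]
  have hfe2 : (x * a) * (a * x) = a * x := by
    rw [show (x*a) * (a*x) = ((x*a) * a) * x by noncomm_ring, hfa]
  have heqf : a * x = x * a := by rw [← hfe2, hfe1]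
  have t1 : a * (a*x*x*(a*x)) = a * x := by
    rw [show a * (a*x*x*(a*x)) = (a * (a*x)) * (x * (a * x)) by noncomm_ring, hae,
      show a * (x * (a * x)) = (a * x * a) * x by noncomm_ring, h]
  have t2 : a * (1 - a*x) = 0 := by rw [mul_sub, mul_one, hae, sub_self]
  have t3 : (1 - a*x) * (a*x*x*(a*x)) = 0 := by
    rw [sub_mul, one_mul,
      show a*x*(a*x*x*(a*x)) = ((a*x)*(a*x)) * (x*(a*x)) by noncomm_ring, he]
    noncomm_ring
  have t4 : (1 - a*x) * (1 - a*x) = 1 - a*x := by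
    rw [show (1 - a*x)*(1 - a*x) = 1 - a*x - a*x + (a*x)*(a*x) by noncomm_ring, he]
    noncomm_ring
  have s1 : (a*x*x*(a*x)) * a = a * x := by
    rw [show (a*x*x*(a*x))*a = a*x*x*(a*x*a) by noncomm_ring, h,
      show a*x*x*a = a*x*(x*a) by noncomm_ring, ← heqf, he]
  have s2 : (a*x*x*(a*x)) * (1 - a*x) = 0 := by
    rw [mul_sub, mul_one,
      show a*x*x*(a*x)*(a*x) = a*x*x*((a*x)*(a*x)) by noncomm_ring, he]
    noncomm_ring
  have s3 : (1 - a*x) * a = 0 := by rw [sub_mul, one_mul, h, sub_self]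
  have huw : (a + (1 - a*x)) * (a*x*x*(a*x) + (1 - a*x)) = 1 := by
    rw [add_mul, mul_add, mul_add, t1, t2, t3, t4]
    noncomm_ring
  have hwu : (a*x*x*(a*x) + (1 - a*x)) * (a + (1 - a*x)) = 1 := by
    rw [add_mul, mul_add, mul_add, s1, s2, s3, t4]
    noncomm_ring
  refine ⟨⟨a + (1 - a*x), a*x*x*(a*x) + (1 - a*x), huw, hwu⟩, a * x, he, hcent, ?_, hae⟩
  show (a + (1 - a*x)) * (a*x) = a
  rw [add_mul, sub_mul, one_mul, he, hae]
  noncomm_ring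

/-- Regular 2-ΔU rings are reduced. -/
private lemma key_reduced (hreg : ∀ a : R, ∃ x : R, a = a * x * a)
    (h2 : Is2DeltaU R) (a : R) (haa : a * a = 0) : a = 0 := by
  obtain ⟨x, hx⟩ := hreg a
  have h : a * x * a = a := hx.symm
  set b := x * a * x with hbdef
  have hb1 : a * b * a = a := by
    rw [hbdef, show a * (x*a*x) * a = (a*x*a)*x*a by noncomm_ring, h, h]
  have hb2 : b * a * b = b := by
    rw [hbdef, show (x*a*x) * a * (x*a*x) = x*((a*x*a)*x*a)*x by noncomm_ring, h, h]
  have r0 : a * a = 0 := haa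
  have r0' : ∀ r : R, a * (a * r) = 0 := fun r => by rw [← mul_assoc, haa, zero_mul]
  have r1 : a * (b * a) = a := by rw [← mul_assoc]; exact hb1
  have r1' : ∀ r : R, a * (b * (a * r)) = a * r := fun r => by
    rw [show a * (b * (a * r)) = (a*b*a)*r by noncomm_ring, hb1]
  have r2 : b * (a * b) = b := by rw [← mul_assoc]; exact hb2
  have r2' : ∀ r : R, b * (a * (b * r)) = b * r := fun r => by
    rw [show b * (a * (b * r)) = (b*a*b)*r by noncomm_ring, hb2]
  set E := a * b with hE
  set F := b * a - a * b * (b * a) with hF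
  set C := F * b * (a * b) with hC
  set U := 1 + a - C - E - (F + F) with hU
  set W := 1 - (E + E) - a + C - F with hW
  have F1 : U * W = 1 := by
    rw [hU, hW, hC, hF, hE]
    simp only [mul_add, add_mul, mul_sub, sub_mul, mul_one, one_mul, mul_zero, zero_mul,
      mul_assoc, r0, r0', r1, r1', r2, r2', sub_zero, zero_add, add_zero, zero_sub]
    noncomm_ring
  have F2 : W * U = 1 := by
    rw [hU, hW, hC, hF, hE]
    simp only [mul_add, add_mul, mul_sub, sub_mul, mul_one, one_mul, mul_zero, zero_mul,
      mul_assoc, r0, r0', r1, r1', r2, r2', sub_zero, zero_add, add_zero, zero_sub]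
    noncomm_ring
  have F3 : U * U = W := by
    rw [hU, hW, hC, hF, hE]
    simp only [mul_add, add_mul, mul_sub, sub_mul, mul_one, one_mul, mul_zero, zero_mul,
      mul_assoc, r0, r0', r1, r1', r2, r2', sub_zero, zero_add, add_zero, zero_sub]
    noncomm_ring
  have F5 : (W - 1 + (1 + a)) * F = 0 := by
    rw [hW, hC, hF, hE]
    simp only [mul_add, add_mul, mul_sub, sub_mul, mul_one, one_mul, mul_zero, zero_mul,
      mul_assoc, r0, r0', r1, r1', r2, r2', sub_zero, zero_add, add_zero, zero_sub]
    noncomm_ring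
  have F6 : a * F = a := by
    rw [hF]
    simp only [mul_add, add_mul, mul_sub, sub_mul, mul_one, one_mul, mul_zero, zero_mul,
      mul_assoc, r0, r0', r1, r1', r2, r2', sub_zero, zero_add, add_zero, zero_sub]
  have hVa : ((1 : R) + a) * (1 - a) = 1 := by
    rw [show ((1 : R) + a) * (1 - a) = 1 + a - a - a*a by noncomm_ring, haa]; noncomm_ring
  have hVb : ((1 : R) - a) * (1 + a) = 1 := by
    rw [show ((1 : R) - a) * (1 + a) = 1 + a - a - a*a by noncomm_ring, haa]; noncomm_ring
  have hs : (U : R)^2 - 1 ∈ Delta R := by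
    have := h2 ⟨U, W, F1, F2⟩
    simpa using this
  have hunit : IsUnit ((U : R)^2 - 1 + ((1 : R) + a)) :=
    hs ⟨1 + a, 1 - a, hVa, hVb⟩
  rw [pow_two, F3] at hunit
  obtain ⟨g, hg⟩ := hunit
  have hF0 : F = 0 := by
    have h9 : (↑g⁻¹ : R) * ((g : R) * F) = F := by
      rw [← mul_assoc, Units.inv_mul, one_mul]
    rw [hg, F5, mul_zero] at h9
    exact h9.symm
  rw [← F6, hF0, mul_zero]

/-- In a reduced regular ring, `Δ(R) = 0`. -/
private lemma delta_zero (hred : ∀ z : R, z * z = 0 → z = 0)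
    (hreg : ∀ a : R, ∃ x : R, a = a * x * a) {d : R} (hd : d ∈ Delta R) : d = 0 := by
  obtain ⟨x, hx⟩ := hreg d
  obtain ⟨u, e, _he, _hc, hue, hde⟩ := core hred hx.symm
  obtain ⟨g, hg⟩ := hd (-u)
  have h0 : (g : R) * e = 0 := by
    rw [hg, Units.val_neg, add_mul, neg_mul, hue, hde, add_neg_cancel]
  have he0 : e = 0 := by
    have h9 : (↑g⁻¹ : R) * ((g : R) * e) = e := by
      rw [← mul_assoc, Units.inv_mul, one_mul]
    rw [h0, mul_zero] at h9
    exact h9.symm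
  rw [← hde, he0, mul_zero]

/-- If `x ^ 3 = x` for all `x`, the ring is 2-ΔU. -/
private lemma cube_is2DeltaU (h : ∀ x : R, x ^ 3 = x) : Is2DeltaU R := by
  intro u
  have hu2 : (u : R) ^ 2 = 1 := by
    have h3 : (u : R) ^ 2 * ↑u = 1 * ↑u := by
      rw [one_mul, ← pow_succ]
      exact h (u : R)
    calc (u : R) ^ 2 = (u : R) ^ 2 * (↑u * ↑u⁻¹) := by rw [Units.mul_inv, mul_one]
      _ = 1 * ↑u * ↑u⁻¹ := by rw [← mul_assoc, h3]
      _ = 1 := by rw [one_mul, Units.mul_inv]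
  intro v
  rw [hu2, sub_self, zero_add]
  exact v.isUnit

end Aux

theorem regular_is2DeltaU_tfae' (R : Type*) [Ring R] :
    List.TFAE
      [(∀ a : R, ∃ x : R, a = a * x * a) ∧ Is2DeltaU R,
       (∀ a : R, ∃ x : R, a = a ^ 2 * x) ∧ Is2DeltaU R,
       (∀ a : R, ∃ u : Rˣ, a = a * (u : R) * a) ∧ Is2DeltaU R,
       ∀ x : R, x ^ 3 = x] := by
  tfae_have 1 → 4 := by
    rintro ⟨hreg, h2⟩ a
    have hred : ∀ z : R, z * z = 0 → z = 0 := fun z hz => key_reduced hreg h2 z hz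
    obtain ⟨x, hx⟩ := hreg a
    obtain ⟨u, e, he, hcent, hue, hae⟩ := core hred hx.symm
    have hu2 : (u : R) * ↑u = 1 := by
      have h0 : (u : R) ^ 2 - 1 = 0 := delta_zero hred hreg (h2 u)
      rw [sub_eq_zero] at h0
      rw [← pow_two]
      exact h0
    have k1 : e * ((u : R) * e) = (u : R) * e := by
      rw [← mul_assoc, hcent ↑u, mul_assoc, he]
    have haa2 : a * a = e := by
      rw [← hue, show (u : R) * e * ((u:R) * e) = (u:R) * (e * ((u:R) * e)) by noncomm_ring,
        k1, ← mul_assoc, hu2, one_mul]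
    rw [pow_succ, pow_two, haa2, hcent a, hae]
  tfae_have 4 → 1 := by
    intro h
    refine ⟨fun a => ⟨a, ?_⟩, cube_is2DeltaU h⟩
    rw [show a * a * a = a ^ 3 by noncomm_ring, h a]
  tfae_have 4 → 2 := by
    intro h
    refine ⟨fun a => ⟨a, ?_⟩, cube_is2DeltaU h⟩
    rw [show a ^ 2 * a = a ^ 3 by noncomm_ring, h a]
  tfae_have 4 → 3 := by
    intro h
    refine ⟨fun a => ?_, cube_is2DeltaU h⟩
    have h4 : a ^ 4 = a ^ 2 := by
      rw [show a ^ 4 = a ^ 3 * a by noncomm_ring, h a, ← pow_two]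
    have huu : (a + (1 - a^2)) * (a + (1 - a^2)) = 1 := by
      rw [show (a + (1 - a^2)) * (a + (1 - a^2))
          = 1 + (a^4 - a^2) + ((a - a^3) + (a - a^3)) by noncomm_ring, h a, h4]
      noncomm_ring
    refine ⟨⟨a + (1 - a^2), a + (1 - a^2), huu, huu⟩, ?_⟩
    show a = a * (a + (1 - a^2)) * a
    rw [show a * (a + (1 - a^2)) * a = a ^ 3 + (a^2 - a^4) by noncomm_ring, h a, h4]
    noncomm_ring
  tfae_have 2 → 1 := by
    rintro ⟨hsr, h2⟩
    refine ⟨fun a => ?_, h2⟩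
    have hred : ∀ z : R, z * z = 0 → z = 0 := by
      intro z hz
      obtain ⟨y, hy⟩ := hsr z
      rw [pow_two, hz, zero_mul] at hy
      exact hy
    obtain ⟨x, hx⟩ := hsr a
    have k1 : a * (a * x) = a := by
      rw [← mul_assoc, ← pow_two]; exact hx.symm
    have k1' : ∀ r : R, a * (a * (x * r)) = a * r := fun r => by
      rw [show a * (a * (x * r)) = (a * (a * x)) * r by noncomm_ring, k1]
    have hz : (a - a*x*a) * (a - a*x*a) = 0 := by
      simp only [mul_sub, sub_mul, mul_assoc, k1, k1']
      abel
    have := hred _ hz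
    rw [sub_eq_zero] at this
    exact ⟨x, this⟩
  tfae_have 3 → 1 := by
    rintro ⟨hur, h2⟩
    exact ⟨fun a => (hur a).elim fun u hu => ⟨u, hu⟩, h2⟩
  tfae_finish
end
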